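/- arXiv:1409.4380 — 4 statements merged into one kernel-verified Lean document; each statement's English description precedes it below -/
import Mathlib

section
/- For paths u,v,x,y in E with r(u)=r(v) and r(x)=r(y), the L-class inequality L_{uv⁻¹} ≤_L L_{xy⁻¹} holds in G(E) if and only if v = yt for some path t. -/
universe u

/-- A directed graph: vertices, edges, source and range maps. -/
structure DGraph : Type (u + 1) where
  V : Type u
  Ed : Type u
  src : Ed → V
  rng : Ed → V

/-- The end vertex of a list of edges started at `v` (ignoring composability). -/
def DGraph.ranAux (G : DGraph) : G.V → List G.Ed → G.V
  | v, [] => v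
  | _, e :: es => DGraph.ranAux G (G.rng e) es

/-- The edges `l` form a composable path starting at `v`. -/
def DGraph.Chain (G : DGraph) : G.V → List G.Ed → Prop
  | _, [] => True
  | v, e :: es => G.src e = v ∧ DGraph.Chain G (G.rng e) es

theorem DGraph.ranAux_append (G : DGraph) (v : G.V) (l1 l2 : List G.Ed) :
    G.ranAux v (l1 ++ l2) = G.ranAux (G.ranAux v l1) l2 := by
  induction l1 generalizing v with
  | nil => rfl
  | cons e es ih => exact ih (G.rng e)

theorem DGraph.chain_append (G : DGraph) {v : G.V} {l1 l2 : List G.Ed}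
    (h1 : G.Chain v l1) (h2 : G.Chain (G.ranAux v l1) l2) : G.Chain v (l1 ++ l2) := by
  induction l1 generalizing v with
  | nil => exact h2
  | cons e es ih => exact ⟨h1.1, ih h1.2 h2⟩

theorem DGraph.chain_append_right (G : DGraph) {v : G.V} {l1 l2 : List G.Ed}
    (h : G.Chain v (l1 ++ l2)) : G.Chain (G.ranAux v l1) l2 := by
  induction l1 generalizing v with
  | nil => exact h
  | cons e es ih => exact ih h.2

/-- A (finite, directed) path in the graph `G`: a start vertex together
with a composable list of edges. Vertices are the paths of length `0`. -/
structure GPath (G : DGraph.{u}) : Type u where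
  start : G.V
  edges : List G.Ed
  chain : G.Chain start edges

namespace GPath

variable {G : DGraph}

/-- The range (end vertex) of a path. -/
def ran (p : GPath G) : G.V := G.ranAux p.start p.edges

/-- The path of length zero at a vertex. -/
def ofVertex (G : DGraph) (v : G.V) : GPath G := ⟨v, [], trivial⟩

/-- The path of length one given by an edge. -/
def ofEdge (G : DGraph) (e : G.Ed) : GPath G := ⟨G.src e, [e], ⟨rfl, trivial⟩⟩

@[simp] theorem ofVertex_ran (G : DGraph) (v : G.V) : (ofVertex G v).ran = v := rfl

@[simp] theorem ofEdge_ran (G : DGraph) (e : G.Ed) : (ofEdge G e).ran = G.rng e := rfl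

/-- Concatenation of composable paths. -/
def append (p q : GPath G) (h : p.ran = q.start) : GPath G :=
  ⟨p.start, p.edges ++ q.edges,
    G.chain_append p.chain (by
      show G.Chain (G.ranAux p.start p.edges) q.edges
      have : G.ranAux p.start p.edges = q.start := h
      rw [this]; exact q.chain)⟩

@[simp] theorem append_ran (p q : GPath G) (h : p.ran = q.start) :
    (p.append q h).ran = q.ran := by
  show G.ranAux p.start (p.edges ++ q.edges) = q.ran
  rw [G.ranAux_append]
  have : G.ranAux p.start p.edges = q.start := h
  rw [this]; rfl

/-- `y` is an initial segment of the path `p`. -/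
def IsPrefixOf (y p : GPath G) : Prop := y.start = p.start ∧ y.edges <+: p.edges

/-- The remainder `t` of `p` after its initial segment `y`, so that `p = y ++ t`. -/
def remainder (y p : GPath G) (h : y.IsPrefixOf p) : GPath G :=
  ⟨y.ran, p.edges.drop y.edges.length, by
    obtain ⟨l2, hl⟩ := h.2
    rw [← hl, List.drop_left]
    show G.Chain (G.ranAux y.start y.edges) l2
    rw [h.1]
    exact G.chain_append_right (v := p.start) (l1 := y.edges) (l2 := l2)
      (by rw [hl]; exact p.chain)⟩

@[simp] theorem remainder_ran (y p : GPath G) (h : y.IsPrefixOf p) :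
    (y.remainder p h).ran = p.ran := by
  obtain ⟨l2, hl⟩ := h.2
  show G.ranAux y.ran (p.edges.drop y.edges.length) = p.ran
  rw [← hl, List.drop_left]
  show G.ranAux (G.ranAux y.start y.edges) l2 = p.ran
  rw [h.1, ← G.ranAux_append, hl]
  rfl

end GPath

/-- The graph inverse semigroup of `G` (in normal form): its elements are zero together
with the elements `x * y⁻¹` for paths `x`, `y` with the same range. -/
inductive GIS (G : DGraph.{u}) : Type u where
  | zero : GIS G
  | mk (x y : GPath G) (h : x.ran = y.ran) : GIS G

instance (G : DGraph) : Zero (GIS G) := ⟨GIS.zero⟩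

open scoped Classical in
/-- Multiplication in the graph inverse semigroup. -/
noncomputable def GIS.gmul {G : DGraph} : GIS G → GIS G → GIS G
  | GIS.zero, _ => GIS.zero
  | GIS.mk _ _ _, GIS.zero => GIS.zero
  | GIS.mk x y hxy, GIS.mk p q hpq =>
    if h1 : y.IsPrefixOf p then
      GIS.mk (x.append (y.remainder p h1) hxy) q
        (by exact (GPath.append_ran _ _ _).trans ((GPath.remainder_ran _ _ _).trans hpq))
    else if h2 : p.IsPrefixOf y then
      GIS.mk x (q.append (p.remainder y h2) hpq.symm)
        (by exact hxy.trans ((GPath.append_ran _ _ _).trans (GPath.remainder_ran _ _ _)).symm)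
    else GIS.zero

noncomputable instance (G : DGraph) : Mul (GIS G) := ⟨GIS.gmul⟩

/-- The element of `GIS G` corresponding to a vertex `v` (i.e. `v = v * v⁻¹`). -/
def vertexEl (G : DGraph) (v : G.V) : GIS G :=
  GIS.mk (GPath.ofVertex G v) (GPath.ofVertex G v) rfl

/-- The element of `GIS G` corresponding to an edge `e` (i.e. `e = e * r(e)⁻¹`). -/
def edgeEl (G : DGraph) (e : G.Ed) : GIS G :=
  GIS.mk (GPath.ofEdge G e) (GPath.ofVertex G (G.rng e)) rfl

/-- The inverse operation on `GIS G`: `(x y⁻¹)⁻¹ = y x⁻¹`. -/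
def GIS.inv {G : DGraph} : GIS G → GIS G
  | GIS.zero => GIS.zero
  | GIS.mk x y h => GIS.mk y x h.symm

/-- `a` lies in the principal left ideal generated by `b` (`S¹a ⊆ S¹b`). -/
def GreenLeL {G : DGraph} (a b : GIS G) : Prop := a = b ∨ ∃ c, a = c * b

/-- `a` lies in the principal right ideal generated by `b` (`aS¹ ⊆ bS¹`). -/
def GreenLeR {G : DGraph} (a b : GIS G) : Prop := a = b ∨ ∃ c, a = b * c

/-- `a` lies in the principal two-sided ideal generated by `b` (`S¹aS¹ ⊆ S¹bS¹`). -/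
def GreenLeJ {G : DGraph} (a b : GIS G) : Prop :=
  a = b ∨ (∃ c, a = c * b) ∨ (∃ c, a = b * c) ∨ (∃ c d, a = c * b * d)

/-- Green's `L`-relation. -/
def GreenEqL {G : DGraph} (a b : GIS G) : Prop := GreenLeL a b ∧ GreenLeL b a

/-- Green's `R`-relation. -/
def GreenEqR {G : DGraph} (a b : GIS G) : Prop := GreenLeR a b ∧ GreenLeR b a

/-- Green's `J`-relation. -/
def GreenEqJ {G : DGraph} (a b : GIS G) : Prop := GreenLeJ a b ∧ GreenLeJ b a

/-- There is a (possibly trivial) directed path from `v` to `w` in `G`. -/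
def GConnected (G : DGraph) (v w : G.V) : Prop := ∃ t : GPath G, t.start = v ∧ t.ran = w

/-- `I` is a (two-sided) ideal of `GIS G`. -/
def GISIdeal {G : DGraph} (I : Set (GIS G)) : Prop :=
  ∀ a ∈ I, ∀ c : GIS G, a * c ∈ I ∧ c * a ∈ I

/-- `R` is the Rees congruence of some ideal `I`, i.e. `R = (I × I) ∪ Δ`. -/
def IsReesCon {G : DGraph} (R : Con (GIS G)) : Prop :=
  ∃ I : Set (GIS G), GISIdeal I ∧ ∀ a b : GIS G, R a b ↔ (a ∈ I ∧ b ∈ I) ∨ a = b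

/-- The only congruences on `GIS G` are the universal one and the diagonal. -/
def CongFree (G : DGraph) : Prop :=
  ∀ R : Con (GIS G), (∀ a b : GIS G, R a b) ∨ (∀ a b : GIS G, R a b ↔ a = b)

/-- The natural partial order on the inverse semigroup `GIS G`:
`a ≤ b` iff `a = ε * b` for some idempotent `ε`. -/
def natLe {G : DGraph} (a b : GIS G) : Prop := ∃ ε : GIS G, ε * ε = ε ∧ a = ε * b

/-- The graph obtained from `G` by deleting the vertices in `S` and all
edges incident to them. -/
def DGraph.delete (G : DGraph) (S : Set G.V) : DGraph where
  V := {v : G.V // v ∉ S}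
  Ed := {e : G.Ed // G.src e ∉ S ∧ G.rng e ∉ S}
  src e := ⟨G.src e.1, e.2.1⟩
  rng e := ⟨G.rng e.1, e.2.2⟩

/-- The graph with a single vertex and `n` loops; its graph inverse semigroup
is the polycyclic monoid `Pₙ`. -/
def polyGraph (n : ℕ) : DGraph :=
  ⟨PUnit, Fin n, fun _ => PUnit.unit, fun _ => PUnit.unit⟩

theorem GPath.ext' {G : DGraph} {p q : GPath G} (h1 : p.start = q.start)
    (h2 : p.edges = q.edges) : p = q := by
  cases p; cases q; simp_all

theorem GIS.mk_eq {G : DGraph} {a b a' b' : GPath G} {h : a.ran = b.ran} {h' : a'.ran = b'.ran}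
    (ha : a = a') (hb : b = b') : GIS.mk a b h = GIS.mk a' b' h' := by
  subst ha; subst hb; rfl

open scoped Classical in
theorem GIS.gmul_mk {G : DGraph} (x y p q : GPath G) (hxy : x.ran = y.ran)
    (hpq : p.ran = q.ran) :
    GIS.mk x y hxy * GIS.mk p q hpq =
      if h1 : y.IsPrefixOf p then
        GIS.mk (x.append (y.remainder p h1) hxy) q
          (by exact (GPath.append_ran _ _ _).trans ((GPath.remainder_ran _ _ _).trans hpq))
      else if h2 : p.IsPrefixOf y then
        GIS.mk x (q.append (p.remainder y h2) hpq.symm)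
          (by exact hxy.trans ((GPath.append_ran _ _ _).trans (GPath.remainder_ran _ _ _)).symm)
      else GIS.zero := rfl

theorem GPath.append_trivial {G : DGraph} (p : GPath G) :
    p.append (GPath.ofVertex G p.ran) rfl = p :=
  GPath.ext' rfl (by simp [GPath.append, GPath.ofVertex])

/-- For paths `u,v,x,y` with `r(u)=r(v)` and `r(x)=r(y)`,
`L_{uv⁻¹} ≤_L L_{xy⁻¹}` in `G(E)` iff `v = yt` for some path `t`. -/
theorem stmt2 (G : DGraph) (u v x y : GPath G) (hu : u.ran = v.ran) (hx : x.ran = y.ran) :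
    GreenLeL (GIS.mk u v hu) (GIS.mk x y hx) ↔
      ∃ (t : GPath G) (h : y.ran = t.start), v = y.append t h := by
  constructor
  · rintro (heq | ⟨c, hc⟩)
    · injection heq with h1 h2
      exact ⟨GPath.ofVertex G y.ran, rfl, h2.trans (GPath.append_trivial y).symm⟩
    · cases c with
      | zero =>
        rw [show ((GIS.zero : GIS G) * GIS.mk x y hx) = GIS.zero from rfl] at hc
        cases hc
      | mk p q hpq =>
        rw [GIS.gmul_mk] at hc
        split_ifs at hc with h1 h2
        · injection hc with e1 e2
          exact ⟨GPath.ofVertex G y.ran, rfl, e2.trans (GPath.append_trivial y).symm⟩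
        · injection hc with e1 e2
          exact ⟨x.remainder q h2, hx.symm, e2⟩
  · rintro ⟨t, h, rfl⟩
    right
    have hur : u.ran = (x.append t (hx.trans h)).ran := by
      rw [GPath.append_ran]; exact hu.trans (GPath.append_ran y t h)
    refine ⟨GIS.mk u (x.append t (hx.trans h)) hur, ?_⟩
    rw [GIS.gmul_mk]
    split_ifs with h1 h2
    · -- x ++ t is a prefix of x, so t is trivial
      have ht : t.edges = [] := by
        have h' := h1.2.length_le
        simp only [GPath.append, List.length_append] at h'
        exact List.eq_nil_of_length_eq_zero (by omega)
      refine GIS.mk_eq ?_ ?_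
      · refine GPath.ext' rfl ?_
        show u.edges = u.edges ++ _
        have : x.edges.length ≤ ((x.append t (hx.trans h)).edges).length := by
          simp [GPath.append]
        simp [GPath.remainder, GPath.append, ht]
      · exact GPath.ext' rfl (by simp [GPath.append, ht])
    · refine GIS.mk_eq rfl (GPath.ext' rfl ?_)
      show y.edges ++ t.edges = y.edges ++ _
      simp [GPath.remainder, GPath.append]
    · exact absurd ⟨rfl, ⟨t.edges, rfl⟩⟩ h2
end

section
/- Every partially ordered set is order-isomorphic to the set of nonzero J-classes of G(E), ordered by ≤_J, for some directed graph E. -/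
universe u

/-! ### Auxiliary lemmas -/

namespace GPath

variable {G : DGraph}

theorem ext'_s9 {p q : GPath G} (h1 : p.start = q.start) (h2 : p.edges = q.edges) : p = q := by
  cases p; cases q
  cases h1; cases h2
  rfl

theorem prefix_refl (p : GPath G) : p.IsPrefixOf p := ⟨rfl, List.prefix_refl _⟩

theorem vertex_prefix {p : GPath G} {v : G.V} (h : p.start = v) :
    (ofVertex G v).IsPrefixOf p := ⟨h.symm, List.nil_prefix⟩

theorem remainder_self (p : GPath G) (h : p.IsPrefixOf p) :
    p.remainder p h = ofVertex G p.ran :=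
  ext'_s9 rfl (by simp [remainder, ofVertex])

theorem remainder_vertex (p : GPath G) {v : G.V} (hv : p.start = v)
    (h : (ofVertex G v).IsPrefixOf p) : (ofVertex G v).remainder p h = p :=
  ext'_s9 hv.symm (by simp [remainder, ofVertex])

theorem append_vertex (p : GPath G) {v : G.V} (_h : p.ran = v)
    (hs : p.ran = (ofVertex G v).start) : p.append (ofVertex G v) hs = p :=
  ext'_s9 rfl (by simp [append, ofVertex])

theorem vertex_append (p : GPath G) {v : G.V} (h : p.start = v)
    (hs : (ofVertex G v).ran = p.start) : (ofVertex G v).append p hs = p :=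
  ext'_s9 h.symm (by simp [append, ofVertex])

end GPath

namespace GIS

variable {G : DGraph}

theorem mk_eq_mk {x y x' y' : GPath G} {h : x.ran = y.ran} {h' : x'.ran = y'.ran}
    (e1 : x = x') (e2 : y = y') : GIS.mk x y h = GIS.mk x' y' h' := by
  cases e1; cases e2; rfl

theorem mk_ne_zero (x y : GPath G) (h : x.ran = y.ran) : GIS.mk x y h ≠ 0 := by
  intro hc
  cases hc

theorem zero_mul' (a : GIS G) : (0 : GIS G) * a = 0 := rfl

theorem zero_eq : (GIS.zero : GIS G) = 0 := rfl

theorem mul_zero' (a : GIS G) : a * (0 : GIS G) = 0 := by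
  cases a <;> rfl

theorem mk_mul_mk_of_prefix {x y p q : GPath G} (hxy : x.ran = y.ran) (hpq : p.ran = q.ran)
    (h1 : y.IsPrefixOf p) :
    GIS.mk x y hxy * GIS.mk p q hpq =
      GIS.mk (x.append (y.remainder p h1) hxy) q
        (by exact (GPath.append_ran _ _ _).trans ((GPath.remainder_ran _ _ _).trans hpq)) := by
  show GIS.gmul _ _ = _
  simp only [GIS.gmul]
  rw [dif_pos h1]

theorem mk_mul_mk_of_prefix' {x y p q : GPath G} (hxy : x.ran = y.ran) (hpq : p.ran = q.ran)
    (hn : ¬ y.IsPrefixOf p) (h2 : p.IsPrefixOf y) :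
    GIS.mk x y hxy * GIS.mk p q hpq =
      GIS.mk x (q.append (p.remainder y h2) hpq.symm)
        (by exact hxy.trans ((GPath.append_ran _ _ _).trans (GPath.remainder_ran _ _ _)).symm) := by
  show GIS.gmul _ _ = _
  simp only [GIS.gmul]
  rw [dif_neg hn, dif_pos h2]

theorem mk_mul_mk_zero {x y p q : GPath G} (hxy : x.ran = y.ran) (hpq : p.ran = q.ran)
    (hn : ¬ y.IsPrefixOf p) (hn' : ¬ p.IsPrefixOf y) :
    GIS.mk x y hxy * GIS.mk p q hpq = 0 := by
  show GIS.gmul _ _ = _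
  simp only [GIS.gmul]
  rw [dif_neg hn, dif_neg hn']
  rfl

/-- The key cancellation law: `(x y⁻¹)(y q⁻¹) = x q⁻¹`. -/
theorem mk_mul_mk_cancel {x y q : GPath G} (hxy : x.ran = y.ran) (hyq : y.ran = q.ran) :
    GIS.mk x y hxy * GIS.mk y q hyq = GIS.mk x q (hxy.trans hyq) := by
  rw [mk_mul_mk_of_prefix hxy hyq (GPath.prefix_refl y)]
  exact mk_eq_mk (GPath.ext'_s9 rfl (by simp [GPath.append, GPath.remainder])) rfl

theorem mk_inj {x y x' y' : GPath G} {h : x.ran = y.ran} {h' : x'.ran = y'.ran}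
    (e : GIS.mk x y h = GIS.mk x' y' h') : x = x' ∧ y = y' := by
  cases e; exact ⟨rfl, rfl⟩

end GIS

section VertexMul

variable {G : DGraph}

theorem mul_vertexEl_eq {u w' : GPath G} (huw : u.ran = w'.ran) {w : G.V} (h : w'.start = w) :
    GIS.mk u w' huw * vertexEl G w = GIS.mk u w' huw := by
  unfold vertexEl
  by_cases hb : w'.IsPrefixOf (GPath.ofVertex G w)
  · -- then w' has no edges, so w' = ofVertex G w
    have hw' : w' = GPath.ofVertex G w :=
      GPath.ext'_s9 h (List.eq_nil_of_prefix_nil hb.2)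
    cases hw'
    rw [GIS.mk_mul_mk_cancel]
  · rw [GIS.mk_mul_mk_of_prefix' huw rfl hb (GPath.vertex_prefix h)]
    exact GIS.mk_eq_mk rfl
      (GPath.ext'_s9 h.symm (by simp [GPath.append, GPath.remainder, GPath.ofVertex]))

theorem mul_vertexEl_zero {u w' : GPath G} (huw : u.ran = w'.ran) {w : G.V}
    (h : w'.start ≠ w) : GIS.mk u w' huw * vertexEl G w = 0 := by
  unfold vertexEl
  refine GIS.mk_mul_mk_zero huw rfl (fun hc => h hc.1) (fun hc => h hc.1.symm)

theorem vertexEl_mul_eq {u w' : GPath G} (huw : u.ran = w'.ran) {w : G.V} (h : u.start = w) :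
    vertexEl G w * GIS.mk u w' huw = GIS.mk u w' huw := by
  unfold vertexEl
  rw [GIS.mk_mul_mk_of_prefix rfl huw (GPath.vertex_prefix h)]
  exact GIS.mk_eq_mk
    (GPath.ext'_s9 h.symm (by simp [GPath.append, GPath.remainder, GPath.ofVertex])) rfl

theorem vertexEl_mul_zero {u w' : GPath G} (huw : u.ran = w'.ran) {w : G.V}
    (h : u.start ≠ w) : vertexEl G w * GIS.mk u w' huw = 0 := by
  unfold vertexEl
  refine GIS.mk_mul_mk_zero rfl huw (fun hc => h hc.1.symm) (fun hc => h hc.1)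

theorem vertexEl_inj {v w : G.V} (h : vertexEl G v = vertexEl G w) : v = w := by
  have := (GIS.mk_inj h).1
  exact congrArg GPath.start this

theorem vertexEl_ne_zero (v : G.V) : vertexEl G v ≠ 0 :=
  GIS.mk_ne_zero _ _ _

/-- If `v ≤_J w` for vertex idempotents, then there is a path from `w` to `v`. -/
theorem greenLeJ_vertex {v w : G.V} (h : GreenLeJ (vertexEl G v) (vertexEl G w)) :
    GConnected G w v := by
  rcases h with h | ⟨c, h⟩ | ⟨c, h⟩ | ⟨c, d, h⟩
  · cases vertexEl_inj h
    exact ⟨GPath.ofVertex G v, rfl, rfl⟩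
  · -- v = c * w
    cases c with
    | zero =>
      rw [GIS.zero_eq, GIS.zero_mul'] at h
      exact absurd h (vertexEl_ne_zero v)
    | mk u w' huw =>
      by_cases hs : w'.start = w
      · rw [mul_vertexEl_eq huw hs] at h
        obtain ⟨h1, h2⟩ := GIS.mk_inj h
        cases h2
        exact ⟨GPath.ofVertex G v, hs, rfl⟩
      · rw [mul_vertexEl_zero huw hs] at h
        exact absurd h (vertexEl_ne_zero v)
  · -- v = w * c
    cases c with
    | zero =>
      rw [GIS.zero_eq, GIS.mul_zero'] at h
      exact absurd h (vertexEl_ne_zero v)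
    | mk u w' huw =>
      by_cases hs : u.start = w
      · rw [vertexEl_mul_eq huw hs] at h
        obtain ⟨h1, h2⟩ := GIS.mk_inj h
        cases h1
        exact ⟨GPath.ofVertex G v, hs, rfl⟩
      · rw [vertexEl_mul_zero huw hs] at h
        exact absurd h (vertexEl_ne_zero v)
  · -- v = c * w * d
    cases c with
    | zero =>
      rw [GIS.zero_eq, GIS.zero_mul', GIS.zero_mul'] at h
      exact absurd h (vertexEl_ne_zero v)
    | mk u w' huw =>
      by_cases hs : w'.start = w
      · rw [mul_vertexEl_eq huw hs] at h
        cases d with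
        | zero =>
          rw [GIS.zero_eq, GIS.mul_zero'] at h
          exact absurd h (vertexEl_ne_zero v)
        | mk s r hsr =>
          by_cases hb : w'.IsPrefixOf s
          · rw [GIS.mk_mul_mk_of_prefix huw hsr hb] at h
            obtain ⟨h1, h2⟩ := GIS.mk_inj h
            refine ⟨s, ?_, ?_⟩
            · rw [← hb.1, hs]
            · have hr : (u.append (w'.remainder s hb) huw).ran = s.ran := by
                exact (GPath.append_ran _ _ _).trans (GPath.remainder_ran _ _ _)
              rw [← hr, ← h1]
              rfl
          · by_cases hb' : s.IsPrefixOf w'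
            · rw [GIS.mk_mul_mk_of_prefix' huw hsr hb hb'] at h
              obtain ⟨h1, h2⟩ := GIS.mk_inj h
              refine ⟨w', hs, ?_⟩
              rw [← huw, ← h1]
              rfl
            · rw [GIS.mk_mul_mk_zero huw hsr hb hb'] at h
              exact absurd h (vertexEl_ne_zero v)
      · rw [mul_vertexEl_zero huw hs, GIS.zero_mul'] at h
        exact absurd h (vertexEl_ne_zero v)

/-- Conversely, a path from `w` to `v` shows `v ≤_J w`. -/
theorem vertex_greenLeJ {v w : G.V} (h : GConnected G w v) :
    GreenLeJ (vertexEl G v) (vertexEl G w) := by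
  obtain ⟨t, hts, htr⟩ := h
  refine Or.inr (Or.inr (Or.inr ⟨GIS.mk (GPath.ofVertex G v) t (by simpa using htr.symm),
    GIS.mk t (GPath.ofVertex G v) (by simpa using htr), ?_⟩))
  rw [mul_vertexEl_eq (w := w) _ hts, GIS.mk_mul_mk_cancel]
  rfl

/-- Every nonzero element is `J`-equivalent to the vertex idempotent at its range. -/
theorem greenEqJ_ran (x y : GPath G) (h : x.ran = y.ran) :
    GreenEqJ (GIS.mk x y h) (vertexEl G x.ran) := by
  have hyx : y.ran = x.ran := h.symm
  constructor
  · refine Or.inr (Or.inr (Or.inr ⟨GIS.mk x (GPath.ofVertex G x.ran) rfl,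
      GIS.mk (GPath.ofVertex G x.ran) y (by simpa using h), ?_⟩))
    exact ((congrArg (fun z => z * GIS.mk (GPath.ofVertex G x.ran) y (by simpa using h))
      (mul_vertexEl_eq (u := x) (w' := GPath.ofVertex G x.ran) rfl (w := x.ran) rfl)).trans
      (GIS.mk_mul_mk_cancel _ _)).symm
  · refine Or.inr (Or.inr (Or.inr ⟨GIS.mk (GPath.ofVertex G x.ran) x rfl,
      GIS.mk y (GPath.ofVertex G x.ran) (by simpa using h.symm), ?_⟩))
    refine Eq.trans ?_ ((congrArg (fun z => z * GIS.mk y (GPath.ofVertex G x.ran) (by simpa using h.symm))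
      (GIS.mk_mul_mk_cancel (x := GPath.ofVertex G x.ran) (y := x) (q := y) rfl h)).trans
      (GIS.mk_mul_mk_cancel _ _)).symm
    rfl

end VertexMul

/-- The graph associated to a partial order: an edge from `q` to `p` whenever `p ≤ q`. -/
@[reducible] def posetGraph (P : Type u) [PartialOrder P] : DGraph.{u} where
  V := P
  Ed := {x : P × P // x.1 ≤ x.2}
  src e := e.1.2
  rng e := e.1.1

theorem posetGraph_ranAux_le (P : Type u) [PartialOrder P] :
    ∀ (l : List (posetGraph P).Ed) (v : (posetGraph P).V),
      (posetGraph P).Chain v l → (posetGraph P).ranAux v l ≤ v := by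
  intro l
  induction l with
  | nil => intro v _; exact le_refl v
  | cons e es ih =>
    intro v hc
    have h1 : (posetGraph P).ranAux ((posetGraph P).rng e) es ≤ (posetGraph P).rng e :=
      ih _ hc.2
    have h2 : (posetGraph P).rng e ≤ (posetGraph P).src e := e.2
    exact le_trans (le_trans h1 h2) (le_of_eq hc.1)

theorem posetGraph_connected (P : Type u) [PartialOrder P] (v w : P) :
    GConnected (posetGraph P) w v ↔ v ≤ w := by
  constructor
  · rintro ⟨t, hts, htr⟩
    have h1 := posetGraph_ranAux_le P t.edges t.start t.chain
    have h2 : t.ran ≤ t.start := h1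
    rw [hts, htr] at h2
    exact h2
  · intro h
    exact ⟨GPath.ofEdge (posetGraph P) ⟨(v, w), h⟩, rfl, rfl⟩

/-- Every partially ordered set is order-isomorphic to the set of nonzero
`J`-classes of `G(E)`, ordered by `≤_J`, for some directed graph `E`. -/
theorem stmt9 (P : Type u) [PartialOrder P] :
    ∃ (G : DGraph.{u}) (F : P → GIS G),
      (∀ p : P, F p ≠ 0) ∧
      (∀ p q : P, p ≤ q ↔ GreenLeJ (F p) (F q)) ∧
      (∀ mu : GIS G, mu ≠ 0 → ∃ p : P, GreenEqJ mu (F p)) := by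
  refine ⟨posetGraph P, fun p => vertexEl (posetGraph P) p, ?_, ?_, ?_⟩
  · intro p
    exact GIS.mk_ne_zero _ _ _
  · intro p q
    constructor
    · intro h
      exact vertex_greenLeJ ((posetGraph_connected P p q).mpr h)
    · intro h
      exact (posetGraph_connected P p q).mp (greenLeJ_vertex h)
  · intro mu hmu
    cases mu with
    | zero => exact absurd rfl hmu
    | mk x y h => exact ⟨x.ran, greenEqJ_ran x y h⟩
end

section
/- If R is a Rees congruence on G(E) with corresponding ideal I, then the quotient G(E)/R is isomorphic as a semigroup to G(E \ (I ∩ E⁰)), the graph inverse semigroup of the graph obtained from E by deleting the vertices in I and all edges incident to them. -/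
universe u

section Aux10

variable {G : DGraph}

theorem gpath_ext {p q : GPath G} (h1 : p.start = q.start) (h2 : p.edges = q.edges) : p = q := by
  cases p; cases q; cases h1; cases h2; rfl

theorem gis_mk_eq {x1 y1 x2 y2 : GPath G} {h1 : x1.ran = y1.ran} {h2 : x2.ran = y2.ran}
    (hx : x1 = x2) (hy : y1 = y2) : GIS.mk x1 y1 h1 = GIS.mk x2 y2 h2 := by
  cases hx; cases hy; rfl

theorem gis_mul_zero (a : GIS G) : a * (0 : GIS G) = 0 := by cases a <;> rfl

theorem gis_zero_mul (a : GIS G) : (0 : GIS G) * a = 0 := rfl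

theorem gis_mul_of_prefix {x y p q : GPath G} (hxy : x.ran = y.ran) (hpq : p.ran = q.ran)
    (h1 : y.IsPrefixOf p) :
    GIS.mk x y hxy * GIS.mk p q hpq =
      GIS.mk (x.append (y.remainder p h1) hxy) q
        (by exact (GPath.append_ran _ _ _).trans ((GPath.remainder_ran _ _ _).trans hpq)) :=
  dif_pos h1

theorem gis_mul_of_prefix' {x y p q : GPath G} (hxy : x.ran = y.ran) (hpq : p.ran = q.ran)
    (h1 : ¬ y.IsPrefixOf p) (h2 : p.IsPrefixOf y) :
    GIS.mk x y hxy * GIS.mk p q hpq =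
      GIS.mk x (q.append (p.remainder y h2) hpq.symm)
        (by exact hxy.trans ((GPath.append_ran _ _ _).trans (GPath.remainder_ran _ _ _)).symm) :=
  (dif_neg h1).trans (dif_pos h2)

theorem gis_mul_of_not {x y p q : GPath G} (hxy : x.ran = y.ran) (hpq : p.ran = q.ran)
    (h1 : ¬ y.IsPrefixOf p) (h2 : ¬ p.IsPrefixOf y) :
    GIS.mk x y hxy * GIS.mk p q hpq = 0 :=
  (dif_neg h1).trans (dif_neg h2)

theorem gpath_prefix_self (y : GPath G) : y.IsPrefixOf y := ⟨rfl, List.prefix_rfl⟩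

/-- Membership of a nonzero element of `GIS G` in an ideal is governed by the
vertex idempotent at its range. -/
theorem gis_mem_iff {I : Set (GIS G)} (hI : GISIdeal I) {x y : GPath G} (h : x.ran = y.ran) :
    GIS.mk x y h ∈ I ↔ vertexEl G x.ran ∈ I := by
  constructor
  · intro ha
    have had : GIS.mk x y h * GIS.mk y (GPath.ofVertex G y.ran) rfl ∈ I :=
      (hI _ ha _).1
    rw [gis_mul_of_prefix (p := y) (q := GPath.ofVertex G y.ran) h rfl (gpath_prefix_self y)] at had
    have hc : GIS.mk (GPath.ofVertex G x.ran) x rfl *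
        GIS.mk (x.append (y.remainder y (gpath_prefix_self y)) h) (GPath.ofVertex G y.ran)
          (by exact (GPath.append_ran _ _ _).trans (GPath.remainder_ran _ _ _)) ∈ I :=
      (hI _ had _).2
    have pre : x.IsPrefixOf (x.append (y.remainder y (gpath_prefix_self y)) h) :=
      ⟨rfl, ⟨(y.remainder y (gpath_prefix_self y)).edges, rfl⟩⟩
    rw [gis_mul_of_prefix (x := GPath.ofVertex G x.ran) (y := x) rfl _ pre] at hc
    have heq : GIS.mk ((GPath.ofVertex G x.ran).append
          (x.remainder (x.append (y.remainder y (gpath_prefix_self y)) h) pre) rfl)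
          (GPath.ofVertex G y.ran)
          (by exact (GPath.append_ran _ _ _).trans ((GPath.remainder_ran _ _ _).trans
            ((GPath.append_ran _ _ _).trans (GPath.remainder_ran _ _ _)))) = vertexEl G x.ran := by
      refine gis_mk_eq (gpath_ext rfl ?_) (by rw [h])
      show ([] : List G.Ed) ++ _ = []
      simp [GPath.remainder, GPath.append, GPath.ofVertex]
    rwa [heq] at hc
  · intro hv
    have step1 : vertexEl G x.ran * GIS.mk (GPath.ofVertex G x.ran) y (by simpa using h) ∈ I :=
      (hI _ hv _).1
    simp only [vertexEl] at step1
    rw [gis_mul_of_prefix (x := GPath.ofVertex G x.ran) (y := GPath.ofVertex G x.ran) (q := y) rfl _ (gpath_prefix_self _)] at step1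
    have step2 : GIS.mk x (GPath.ofVertex G x.ran) rfl *
        GIS.mk ((GPath.ofVertex G x.ran).append
          ((GPath.ofVertex G x.ran).remainder (GPath.ofVertex G x.ran)
            (gpath_prefix_self _)) rfl) y
          (by exact (GPath.append_ran _ _ _).trans ((GPath.remainder_ran _ _ _).trans h)) ∈ I :=
      (hI _ step1 _).2
    have pre2 : (GPath.ofVertex G x.ran).IsPrefixOf
        ((GPath.ofVertex G x.ran).append
          ((GPath.ofVertex G x.ran).remainder (GPath.ofVertex G x.ran)
            (gpath_prefix_self _)) rfl) := ⟨rfl, List.nil_prefix⟩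
    rw [gis_mul_of_prefix (x := x) (y := GPath.ofVertex G x.ran) (q := y) rfl _ pre2] at step2
    have heq : GIS.mk (x.append ((GPath.ofVertex G x.ran).remainder _ pre2) rfl) y
        (by exact (GPath.append_ran _ _ _).trans ((GPath.remainder_ran _ _ _).trans
              ((GPath.append_ran _ _ _).trans ((GPath.remainder_ran _ _ _).trans h)))) = GIS.mk x y h := by
      refine gis_mk_eq (gpath_ext rfl ?_) rfl
      show x.edges ++ _ = x.edges
      simp [GPath.remainder, GPath.append, GPath.ofVertex]
    rwa [heq] at step2

theorem gis_hered {I : Set (GIS G)} (hI : GISIdeal I) (e : G.Ed)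
    (hv : vertexEl G (G.src e) ∈ I) : vertexEl G (G.rng e) ∈ I := by
  have pre : (GPath.ofVertex G (G.src e)).IsPrefixOf (GPath.ofEdge G e) :=
    ⟨rfl, List.nil_prefix⟩
  have h1 : vertexEl G (G.src e) * edgeEl G e = edgeEl G e := by
    simp only [vertexEl, edgeEl]
    rw [gis_mul_of_prefix (x := GPath.ofVertex G (G.src e)) (y := GPath.ofVertex G (G.src e))
        (p := GPath.ofEdge G e) (q := GPath.ofVertex G (G.rng e)) rfl rfl pre]
    refine gis_mk_eq (gpath_ext rfl ?_) rfl
    show ([] : List G.Ed) ++ _ = [e]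
    simp [GPath.remainder, GPath.append, GPath.ofEdge, GPath.ofVertex]
  have he : edgeEl G e ∈ I := by
    have := (hI _ hv (edgeEl G e)).1
    rwa [h1] at this
  exact (gis_mem_iff hI (x := GPath.ofEdge G e) (y := GPath.ofVertex G (G.rng e)) rfl).mp he

theorem chain_hered {S : Set G.V} (hS : ∀ e : G.Ed, G.src e ∈ S → G.rng e ∈ S) :
    ∀ (l : List G.Ed) (v : G.V), G.Chain v l → v ∈ S → G.ranAux v l ∈ S := by
  intro l
  induction l with
  | nil => intro v _ hv; exact hv
  | cons e es ih =>
    intro v hch hv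
    exact ih (G.rng e) hch.2 (hS e (hch.1 ▸ hv))

theorem chain_good {S : Set G.V} (hS : ∀ e : G.Ed, G.src e ∈ S → G.rng e ∈ S) :
    ∀ (l : List G.Ed) (v : G.V), G.Chain v l → G.ranAux v l ∉ S →
      v ∉ S ∧ ∀ e ∈ l, G.src e ∉ S ∧ G.rng e ∉ S := by
  intro l
  induction l with
  | nil => intro v _ hv; exact ⟨hv, by simp⟩
  | cons e es ih =>
    intro v hch hr
    obtain ⟨h1, h2⟩ := ih (G.rng e) hch.2 hr
    have hsrc : G.src e ∉ S := fun hs => h1 (hS e hs)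
    refine ⟨hch.1 ▸ hsrc, ?_⟩
    intro e' he'
    rcases List.mem_cons.mp he' with he' | he'
    · exact he' ▸ ⟨hsrc, h1⟩
    · exact h2 e' he'

theorem chain_map {S : Set G.V} :
    ∀ (l : List (G.delete S).Ed) (v : (G.delete S).V),
      (G.delete S).Chain v l → G.Chain v.1 (l.map Subtype.val) := by
  intro l
  induction l with
  | nil => intro v _; trivial
  | cons e es ih =>
    intro v hch
    exact ⟨congrArg Subtype.val hch.1, ih ((G.delete S).rng e) hch.2⟩

theorem ranAux_map {S : Set G.V} :
    ∀ (l : List (G.delete S).Ed) (v : (G.delete S).V),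
      G.ranAux v.1 (l.map Subtype.val) = ((G.delete S).ranAux v l).1 := by
  intro l
  induction l with
  | nil => intro v; rfl
  | cons e es ih => intro v; exact ih ((G.delete S).rng e)

/-- Embed a path of the deleted graph into `G`. -/
def mapPath {S : Set G.V} (p : GPath (G.delete S)) : GPath G :=
  ⟨p.start.1, p.edges.map Subtype.val, chain_map p.edges p.start p.chain⟩

theorem mapPath_ran {S : Set G.V} (p : GPath (G.delete S)) : (mapPath p).ran = p.ran.1 :=
  ranAux_map p.edges p.start

theorem mapPath_inj {S : Set G.V} {p q : GPath (G.delete S)} (h : mapPath p = mapPath q) :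
    p = q := by
  have h1 : p.start.1 = q.start.1 := congrArg GPath.start h
  have h2 : p.edges.map Subtype.val = q.edges.map Subtype.val := congrArg GPath.edges h
  exact gpath_ext (Subtype.ext h1) (List.map_injective_iff.mpr Subtype.val_injective h2)

theorem prefix_map_iff {S : Set G.V} {y p : GPath (G.delete S)} :
    (mapPath y).IsPrefixOf (mapPath p) ↔ y.IsPrefixOf p := by
  constructor
  · rintro ⟨h1, h2⟩
    refine ⟨Subtype.ext h1, ?_⟩
    rw [List.prefix_iff_eq_take]
    apply List.map_injective_iff.mpr Subtype.val_injective
    erw [List.map_take]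
    rw [List.prefix_iff_eq_take] at h2
    erw [List.length_map] at h2
    exact h2
  · rintro ⟨h1, h2⟩
    exact ⟨congrArg Subtype.val h1, h2.map _⟩

theorem chain_pmap {S : Set G.V} :
    ∀ (l : List G.Ed) (v : G.V) (hv : v ∉ S)
      (hl : ∀ e ∈ l, G.src e ∉ S ∧ G.rng e ∉ S), G.Chain v l →
      (G.delete S).Chain ⟨v, hv⟩ (l.pmap (fun e he => (⟨e, he⟩ : (G.delete S).Ed)) hl) := by
  intro l
  induction l with
  | nil => intro v hv hl _; trivial
  | cons e es ih =>
    intro v hv hl hch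
    exact ⟨Subtype.ext hch.1, ih (G.rng e) (hl e (by simp)).2 _ hch.2⟩

/-- Lift a path of `G` avoiding `S` to a path of the deleted graph. -/
def liftPath {S : Set G.V} (p : GPath G) (h0 : p.start ∉ S)
    (hl : ∀ e ∈ p.edges, G.src e ∉ S ∧ G.rng e ∉ S) : GPath (G.delete S) :=
  ⟨⟨p.start, h0⟩, p.edges.pmap (fun e he => (⟨e, he⟩ : (G.delete S).Ed)) hl,
    chain_pmap p.edges p.start h0 hl p.chain⟩

theorem mapPath_liftPath {S : Set G.V} (p : GPath G) (h0 : p.start ∉ S)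
    (hl : ∀ e ∈ p.edges, G.src e ∉ S ∧ G.rng e ∉ S) :
    mapPath (liftPath p h0 hl) = p := by
  refine gpath_ext rfl ?_
  show List.map Subtype.val (p.edges.pmap _ hl) = p.edges
  rw [List.map_pmap]
  exact List.pmap_eq_map (f := id) (l := p.edges) hl ▸ (List.map_id p.edges)

theorem liftPath_ran_val {S : Set G.V} (p : GPath G) (h0 : p.start ∉ S)
    (hl : ∀ e ∈ p.edges, G.src e ∉ S ∧ G.rng e ∉ S) :
    ((liftPath p h0 hl).ran).1 = p.ran := by
  rw [← mapPath_ran, mapPath_liftPath]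

/-- Embed `GIS (G.delete S)` into `GIS G`. -/
def gisMap {S : Set G.V} : GIS (G.delete S) → GIS G
  | GIS.zero => GIS.zero
  | GIS.mk x y h => GIS.mk (mapPath x) (mapPath y)
      (by rw [mapPath_ran, mapPath_ran, h])

theorem gisMap_mul {S : Set G.V} (a b : GIS (G.delete S)) :
    gisMap (a * b) = gisMap a * gisMap b := by
  cases a with
  | zero => rfl
  | mk x y hxy =>
    cases b with
    | zero => rfl
    | mk p q hpq =>
      by_cases h1 : y.IsPrefixOf p
      · rw [gis_mul_of_prefix hxy hpq h1]
        show _ = GIS.mk (mapPath x) (mapPath y) _ * GIS.mk (mapPath p) (mapPath q) _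
        rw [gis_mul_of_prefix _ _ (prefix_map_iff.mpr h1)]
        refine gis_mk_eq (gpath_ext rfl ?_) rfl
        show List.map Subtype.val (x.edges ++ p.edges.drop y.edges.length) = _
        simp [mapPath, GPath.append, GPath.remainder, List.map_drop]
        erw [List.map_append, List.map_drop, List.length_map]
        rfl
      · by_cases h2 : p.IsPrefixOf y
        · rw [gis_mul_of_prefix' hxy hpq h1 h2]
          show _ = GIS.mk (mapPath x) (mapPath y) _ * GIS.mk (mapPath p) (mapPath q) _
          rw [gis_mul_of_prefix' _ _ (fun hh => h1 (prefix_map_iff.mp hh))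
            (prefix_map_iff.mpr h2)]
          refine gis_mk_eq rfl (gpath_ext rfl ?_)
          show List.map Subtype.val (q.edges ++ y.edges.drop p.edges.length) = _
          simp [mapPath, GPath.append, GPath.remainder, List.map_drop]
          erw [List.map_append, List.map_drop, List.length_map]
          rfl
        · rw [gis_mul_of_not hxy hpq h1 h2]
          show _ = GIS.mk (mapPath x) (mapPath y) _ * GIS.mk (mapPath p) (mapPath q) _
          rw [gis_mul_of_not _ _ (fun hh => h1 (prefix_map_iff.mp hh))
            (fun hh => h2 (prefix_map_iff.mp hh))]
          rfl

end Aux10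

/-- If `R` is the Rees congruence on `G(E)` of an ideal `I`, then
`G(E)/R` is isomorphic as a semigroup to `G(E \ (I ∩ E⁰))`. -/
theorem stmt10 (G : DGraph) (R : Con (GIS G)) (I : Set (GIS G)) (hI : GISIdeal I)
    (hR : ∀ a b : GIS G, R a b ↔ (a ∈ I ∧ b ∈ I) ∨ a = b) :
    Nonempty (R.Quotient ≃* GIS (G.delete {v : G.V | vertexEl G v ∈ I})) := by
  set S : Set G.V := {v : G.V | vertexEl G v ∈ I} with hSdef
  have hS : ∀ e : G.Ed, G.src e ∈ S → G.rng e ∈ S := fun e h => gis_hered hI e h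
  -- the semigroup homomorphism
  let f : GIS (G.delete S) →ₙ* R.Quotient :=
    { toFun := fun d => ((gisMap d : GIS G) : R.Quotient)
      map_mul' := by
        intro a b
        show ((gisMap (a * b) : GIS G) : R.Quotient) = _
        rw [gisMap_mul]
        rfl }
  have hzero : ∀ d : GIS (G.delete S), gisMap d ∈ I → d = 0 := by
    intro d hd
    cases d with
    | zero => rfl
    | mk x y h =>
      exfalso
      have := (gis_mem_iff hI (x := mapPath x) (y := mapPath y)
        (by rw [mapPath_ran, mapPath_ran, h])).mp hd
      rw [mapPath_ran] at this
      exact x.ran.2 this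
  have hinj : Function.Injective f := by
    intro a b hab
    have hRab : R (gisMap a) (gisMap b) := R.eq.mp hab
    rcases (hR _ _).mp hRab with ⟨h1, h2⟩ | h
    · rw [hzero a h1, hzero b h2]
    · cases a with
      | zero =>
        cases b with
        | zero => rfl
        | mk p q hpq => exact absurd h (by simp [gisMap])
      | mk x y hxy =>
        cases b with
        | zero => exact absurd h (by simp [gisMap])
        | mk p q hpq =>
          simp only [gisMap] at h
          injection h with h1 h2
          exact gis_mk_eq (mapPath_inj h1) (mapPath_inj h2)
  have hsurj : Function.Surjective f := by
    intro qq
    induction qq using Quotient.inductionOn' with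
    | h a =>
      cases a with
      | zero => exact ⟨0, rfl⟩
      | mk x y h =>
        by_cases hv : vertexEl G x.ran ∈ I
        · have ha : GIS.mk x y h ∈ I := (gis_mem_iff hI h).mpr hv
          have h0 : (0 : GIS G) ∈ I := by
            have := (hI _ ha (0 : GIS G)).1
            rwa [gis_mul_zero] at this
          refine ⟨0, ?_⟩
          show ((gisMap (0 : GIS (G.delete S)) : GIS G) : R.Quotient) = _
          exact R.eq.mpr ((hR _ _).mpr (Or.inl ⟨h0, ha⟩))
        · have hx : x.ran ∉ S := hv
          have hy : y.ran ∉ S := h ▸ hx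
          obtain ⟨hx0, hxl⟩ := chain_good hS x.edges x.start x.chain hx
          obtain ⟨hy0, hyl⟩ := chain_good hS y.edges y.start y.chain hy
          refine ⟨GIS.mk (liftPath x hx0 hxl) (liftPath y hy0 hyl)
            (Subtype.ext (by rw [liftPath_ran_val, liftPath_ran_val, h])), ?_⟩
          show ((gisMap _ : GIS G) : R.Quotient) = _
          refine congrArg _ ?_
          show GIS.mk (mapPath (liftPath x hx0 hxl)) (mapPath (liftPath y hy0 hyl)) _ =
            GIS.mk x y h
          exact gis_mk_eq (mapPath_liftPath x hx0 hxl) (mapPath_liftPath y hy0 hyl)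
  exact ⟨(MulEquiv.ofBijective f ⟨hinj, hsurj⟩).symm⟩
end

section
/- Let e ∈ E¹ with v = s(e), and suppose every path p of positive length with s(p) = v and r(p) = r(e) has the form p = et for some path t. Then the least congruence on G(E) containing the pair (v, ee⁻¹) is not a Rees congruence. -/
universe u

namespace Stmt13Aux

open GPath

variable {G : DGraph}

theorem GPath.ext' {p q : GPath G} (h1 : p.start = q.start) (h2 : p.edges = q.edges) :
    p = q := by
  cases p; cases q; dsimp at h1 h2; subst h1; subst h2; rfl

theorem mk_congr {x y x' y' : GPath G} {hxy : x.ran = y.ran} {hxy' : x'.ran = y'.ran}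
    (h1 : x = x') (h2 : y = y') : GIS.mk x y hxy = GIS.mk x' y' hxy' := by
  subst h1; subst h2; rfl

theorem mk_ne_zero {x y : GPath G} {hxy : x.ran = y.ran} : GIS.mk x y hxy ≠ 0 := by
  intro hh; cases hh

/-- list prefix cancellation -/
theorem prefix_cancel {α : Type*} (l a b : List α) : l ++ a <+: l ++ b ↔ a <+: b := by
  constructor
  · rintro ⟨t, ht⟩
    exact ⟨t, List.append_cancel_left (by rwa [← List.append_assoc])⟩
  · rintro ⟨t, ht⟩
    exact ⟨t, by rw [List.append_assoc, ht]⟩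

theorem prefix_concat_cases {α : Type*} {l m : List α} {a : α} (h : l <+: m ++ [a]) :
    l <+: m ∨ l = m ++ [a] := by
  obtain ⟨t, ht⟩ := h
  rcases List.eq_nil_or_concat t with rfl | ⟨t', b, rfl⟩
  · right; simpa using ht
  · left
    rw [List.concat_eq_append, ← List.append_assoc] at ht
    exact ⟨t', (List.append_inj' ht rfl).1⟩

/-- chain of a prefix -/
theorem chain_take (G : DGraph) {v : G.V} {l1 l2 : List G.Ed} (h : G.Chain v (l1 ++ l2)) :
    G.Chain v l1 := by
  induction l1 generalizing v with
  | nil => trivial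
  | cons a t ih => exact ⟨h.1, ih h.2⟩

theorem chain_concat_src (G : DGraph) {v : G.V} {l : List G.Ed} {a : G.Ed}
    (h : G.Chain v (l ++ [a])) : G.ranAux v l = G.src a :=
  (G.chain_append_right h).1.symm

theorem ran_concat {x : GPath G} {l : List G.Ed} {a : G.Ed} (h : x.edges = l ++ [a]) :
    x.ran = G.rng a := by
  show G.ranAux x.start x.edges = _
  rw [h, G.ranAux_append]; rfl

/- multiplication computation lemmas -/

theorem append_rem_ran (x y p : GPath G) (h1 : y.IsPrefixOf p)
    (hxy : x.ran = (y.remainder p h1).start) :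
    (x.append (y.remainder p h1) hxy).ran = p.ran :=
  (GPath.append_ran _ _ _).trans (GPath.remainder_ran _ _ _)

open scoped Classical in
theorem gmul_mk_mk (x y p q : GPath G) (hxy : x.ran = y.ran) (hpq : p.ran = q.ran) :
    GIS.mk x y hxy * GIS.mk p q hpq =
      (if h1 : y.IsPrefixOf p then
        GIS.mk (x.append (y.remainder p h1) hxy) q
          (by exact (GPath.append_ran _ _ _).trans ((GPath.remainder_ran _ _ _).trans hpq))
      else if h2 : p.IsPrefixOf y then
        GIS.mk x (q.append (p.remainder y h2) hpq.symm)
          (by exact hxy.trans ((GPath.append_ran _ _ _).trans (GPath.remainder_ran _ _ _)).symm)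
      else 0) := rfl

theorem mul_pref1 {x y p q : GPath G} {hxy : x.ran = y.ran} {hpq : p.ran = q.ran}
    (h1 : y.IsPrefixOf p)
    (pf : (x.append (y.remainder p h1) hxy).ran = q.ran) :
    GIS.mk x y hxy * GIS.mk p q hpq = GIS.mk (x.append (y.remainder p h1) hxy) q pf := by
  rw [gmul_mk_mk, dif_pos h1]

theorem mul_pref2 {x y p q : GPath G} {hxy : x.ran = y.ran} {hpq : p.ran = q.ran}
    (h1 : ¬ y.IsPrefixOf p) (h2 : p.IsPrefixOf y)
    (pf : x.ran = (q.append (p.remainder y h2) hpq.symm).ran) :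
    GIS.mk x y hxy * GIS.mk p q hpq = GIS.mk x (q.append (p.remainder y h2) hpq.symm) pf := by
  rw [gmul_mk_mk, dif_neg h1, dif_pos h2]

theorem mul_none {x y p q : GPath G} {hxy : x.ran = y.ran} {hpq : p.ran = q.ran}
    (h1 : ¬ y.IsPrefixOf p) (h2 : ¬ p.IsPrefixOf y) :
    GIS.mk x y hxy * GIS.mk p q hpq = 0 := by
  rw [gmul_mk_mk, dif_neg h1, dif_neg h2]

theorem zero_mul' (a : GIS G) : (0 : GIS G) * a = 0 := rfl

theorem mul_zero' (a : GIS G) : a * (0 : GIS G) = 0 := by cases a <;> rfl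

end Stmt13Aux
namespace Stmt13Aux

open scoped Classical in
/-- strip common trailing `e`'s from both lists -/
noncomputable def strip2 (G : DGraph) (e : G.Ed) (l₁ l₂ : List G.Ed) : List G.Ed × List G.Ed :=
  if h : (∃ l', l₁ = l' ++ [e]) ∧ (∃ l', l₂ = l' ++ [e]) then
    strip2 G e l₁.dropLast l₂.dropLast
  else (l₁, l₂)
termination_by l₁.length
decreasing_by
  obtain ⟨⟨l', rfl⟩, -⟩ := h
  simp [List.dropLast_concat]

theorem strip2_concat (G : DGraph) (e : G.Ed) (l₁ l₂ : List G.Ed) :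
    strip2 G e (l₁ ++ [e]) (l₂ ++ [e]) = strip2 G e l₁ l₂ := by
  rw [strip2, dif_pos ⟨⟨l₁, rfl⟩, ⟨l₂, rfl⟩⟩, List.dropLast_concat, List.dropLast_concat]

theorem strip2_of_not {G : DGraph} {e : G.Ed} {l₁ l₂ : List G.Ed}
    (h : ¬ ((∃ l', l₁ = l' ++ [e]) ∧ (∃ l', l₂ = l' ++ [e]))) :
    strip2 G e l₁ l₂ = (l₁, l₂) := by
  rw [strip2, dif_neg h]

variable {G : DGraph}

theorem strip2_spec_aux (e : G.Ed) :
    ∀ (n : ℕ) (l₁ l₂ : List G.Ed) (v₁ v₂ : G.V), l₁.length ≤ n →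
      G.Chain v₁ l₁ → G.Chain v₂ l₂ → G.ranAux v₁ l₁ = G.ranAux v₂ l₂ →
      G.Chain v₁ (strip2 G e l₁ l₂).1 ∧ G.Chain v₂ (strip2 G e l₁ l₂).2 ∧
        G.ranAux v₁ (strip2 G e l₁ l₂).1 = G.ranAux v₂ (strip2 G e l₁ l₂).2 := by
  intro n
  induction n with
  | zero =>
    intro l₁ l₂ v₁ v₂ hlen c₁ c₂ hr
    rw [strip2_of_not (by rintro ⟨⟨l', rfl⟩, -⟩; simp at hlen)]
    exact ⟨c₁, c₂, hr⟩
  | succ n ih =>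
    intro l₁ l₂ v₁ v₂ hlen c₁ c₂ hr
    by_cases hc : (∃ l', l₁ = l' ++ [e]) ∧ (∃ l', l₂ = l' ++ [e])
    · obtain ⟨⟨m₁, rfl⟩, ⟨m₂, rfl⟩⟩ := hc
      rw [strip2_concat]
      exact ih m₁ m₂ v₁ v₂ (by simp at hlen; omega) (chain_take G c₁) (chain_take G c₂)
        ((chain_concat_src G c₁).trans (chain_concat_src G c₂).symm)
    · rw [strip2_of_not hc]; exact ⟨c₁, c₂, hr⟩

theorem strip2_path (e : G.Ed) (x y : GPath G) (hxy : x.ran = y.ran) :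
    G.Chain x.start (strip2 G e x.edges y.edges).1 ∧
      G.Chain y.start (strip2 G e x.edges y.edges).2 ∧
      G.ranAux x.start (strip2 G e x.edges y.edges).1 =
        G.ranAux y.start (strip2 G e x.edges y.edges).2 :=
  strip2_spec_aux e x.edges.length x.edges y.edges x.start y.start le_rfl x.chain y.chain hxy

theorem strip2_cases (e : G.Ed) :
    ∀ (n : ℕ) (l₁ l₂ : List G.Ed) (v₁ : G.V), l₁.length ≤ n → G.Chain v₁ l₁ →
      strip2 G e l₁ l₂ = (l₁, l₂) ∨ G.ranAux v₁ (strip2 G e l₁ l₂).1 = G.src e := by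
  intro n
  induction n with
  | zero =>
    intro l₁ l₂ v₁ hlen c₁
    rw [strip2_of_not (by rintro ⟨⟨l', rfl⟩, -⟩; simp at hlen)]
    exact Or.inl rfl
  | succ n ih =>
    intro l₁ l₂ v₁ hlen c₁
    by_cases hc : (∃ l', l₁ = l' ++ [e]) ∧ (∃ l', l₂ = l' ++ [e])
    · obtain ⟨⟨m₁, rfl⟩, ⟨m₂, rfl⟩⟩ := hc
      rw [strip2_concat]
      rcases ih m₁ m₂ v₁ (by simp at hlen; omega) (chain_take G c₁) with heq | hran
      · rw [heq]; exact Or.inr (chain_concat_src G c₁)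
      · exact Or.inr hran
    · rw [strip2_of_not hc]; exact Or.inl rfl

/-- normal form: strip common trailing `e`'s -/
noncomputable def gnorm (G : DGraph) (e : G.Ed) : GIS G → GIS G
  | GIS.zero => GIS.zero
  | GIS.mk x y hxy =>
      GIS.mk ⟨x.start, (strip2 G e x.edges y.edges).1, (strip2_path e x y hxy).1⟩
        ⟨y.start, (strip2 G e x.edges y.edges).2, (strip2_path e x y hxy).2.1⟩
        ((strip2_path e x y hxy).2.2)

theorem gnorm_zero (e : G.Ed) : gnorm G e 0 = 0 := rfl

theorem gnorm_mk (e : G.Ed) (x y : GPath G) (hxy : x.ran = y.ran) :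
    gnorm G e (GIS.mk x y hxy) =
      GIS.mk ⟨x.start, (strip2 G e x.edges y.edges).1, (strip2_path e x y hxy).1⟩
        ⟨y.start, (strip2 G e x.edges y.edges).2, (strip2_path e x y hxy).2.1⟩
        ((strip2_path e x y hxy).2.2) := rfl

theorem gnorm_congr {e : G.Ed} {x y x' y' : GPath G} {hxy : x.ran = y.ran}
    {hxy' : x'.ran = y'.ran} (h1 : x.start = x'.start) (h2 : y.start = y'.start)
    (hs : strip2 G e x.edges y.edges = strip2 G e x'.edges y'.edges) :
    gnorm G e (GIS.mk x y hxy) = gnorm G e (GIS.mk x' y' hxy') := by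
  rw [gnorm_mk, gnorm_mk]
  exact mk_congr
    (GPath.ext' h1 (by show (strip2 G e x.edges y.edges).1 = (strip2 G e x'.edges y'.edges).1
                       rw [hs]))
    (GPath.ext' h2 (by show (strip2 G e x.edges y.edges).2 = (strip2 G e x'.edges y'.edges).2
                       rw [hs]))

theorem gnorm_ne_zero {e : G.Ed} {x y : GPath G} {hxy : x.ran = y.ran} :
    gnorm G e (GIS.mk x y hxy) ≠ 0 := by
  rw [gnorm_mk]; exact mk_ne_zero

end Stmt13Aux
namespace Stmt13Aux

variable {G : DGraph}

/-- vertices from which `r(e)` is unreachable -/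
def Hset (G : DGraph) (e : G.Ed) : Set G.V := {w | ¬ GConnected G w (G.rng e)}

theorem src_not_mem (e : G.Ed) : G.src e ∉ Hset G e :=
  fun hw => hw ⟨GPath.ofEdge G e, rfl, GPath.ofEdge_ran G e⟩

theorem rng_not_mem (e : G.Ed) : G.rng e ∉ Hset G e :=
  fun hw => hw ⟨GPath.ofVertex G (G.rng e), rfl, GPath.ofVertex_ran G (G.rng e)⟩

theorem Hset_hered {e : G.Ed} {w : G.V} {l : List G.Ed} (hc : G.Chain w l)
    (hw : w ∈ Hset G e) : G.ranAux w l ∈ Hset G e := by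
  rintro ⟨t, ht1, ht2⟩
  exact hw ⟨(⟨w, l, hc⟩ : GPath G).append t ht1.symm, rfl,
    by exact (GPath.append_ran _ _ _).trans ht2⟩

/-- the ideal used to separate -/
def Iset (G : DGraph) (e : G.Ed) : Set (GIS G) :=
  {a | a = 0 ∨ ∃ x y hxy, a = GIS.mk x y hxy ∧ x.ran ∈ Hset G e}

theorem zero_mem (e : G.Ed) : (0 : GIS G) ∈ Iset G e := Or.inl rfl

theorem mk_mem_iff {e : G.Ed} {x y : GPath G} {hxy : x.ran = y.ran} :
    GIS.mk x y hxy ∈ Iset G e ↔ x.ran ∈ Hset G e := by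
  constructor
  · rintro (habs | ⟨x', y', h', heq, hm⟩)
    · exact absurd habs mk_ne_zero
    · obtain ⟨rfl, -⟩ := GIS.mk.inj heq
      exact hm
  · intro hm; exact Or.inr ⟨x, y, hxy, rfl, hm⟩

theorem ran_mem_of_prefix {e : G.Ed} {y p : GPath G} (h1 : y.IsPrefixOf p)
    (hm : y.ran ∈ Hset G e) : p.ran ∈ Hset G e := by
  obtain ⟨rest, hrest⟩ := h1.2
  have hchain : G.Chain y.ran rest := by
    have h2 := G.chain_append_right (v := p.start) (l1 := y.edges) (l2 := rest)
      (by rw [hrest]; exact p.chain)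
    rwa [← h1.1] at h2
  have hpr : p.ran = G.ranAux y.ran rest := by
    show G.ranAux p.start p.edges = _
    rw [← hrest, G.ranAux_append, ← h1.1]; rfl
  rw [hpr]
  exact Hset_hered hchain hm

theorem ideal_Iset (e : G.Ed) : GISIdeal (Iset G e) := by
  intro a ha c
  rcases ha with rfl | ⟨x, y, hxy, rfl, hm⟩
  · rw [zero_mul' c, mul_zero' c]; exact ⟨zero_mem e, zero_mem e⟩
  cases c with
  | zero =>
    show GIS.mk x y hxy * 0 ∈ _ ∧ (0 : GIS G) * GIS.mk x y hxy ∈ _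
    rw [mul_zero', zero_mul']; exact ⟨zero_mem e, zero_mem e⟩
  | mk p q hpq =>
    have hym : y.ran ∈ Hset G e := hxy ▸ hm
    constructor
    · by_cases h1 : y.IsPrefixOf p
      · rw [mul_pref1 h1 (by exact (append_rem_ran _ _ _ _ _).trans hpq)]
        rw [mk_mem_iff]; refine Eq.mpr (congrArg (· ∈ Hset G e) (append_rem_ran _ _ _ _ _)) ?_
        exact ran_mem_of_prefix h1 hym
      · by_cases h2 : p.IsPrefixOf y
        · rw [mul_pref2 h1 h2 (by exact hxy.trans (append_rem_ran _ _ _ _ _).symm)]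
          rw [mk_mem_iff]; exact hm
        · rw [mul_none h1 h2]; exact zero_mem e
    · by_cases h1 : q.IsPrefixOf x
      · rw [mul_pref1 h1 (by exact (append_rem_ran _ _ _ _ _).trans hxy)]
        rw [mk_mem_iff]; refine Eq.mpr (congrArg (· ∈ Hset G e) (append_rem_ran _ _ _ _ _)) ?_
        exact hm
      · by_cases h2 : x.IsPrefixOf q
        · rw [mul_pref2 h1 h2 (by exact hpq.trans (append_rem_ran _ _ _ _ _).symm)]
          rw [mk_mem_iff]
          rw [hpq]
          exact ran_mem_of_prefix h2 hm
        · rw [mul_none h1 h2]; exact zero_mem e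

theorem gnorm_fix {e : G.Ed} {a : GIS G} (ha : a ∈ Iset G e) : gnorm G e a = a := by
  rcases ha with rfl | ⟨x, y, hxy, rfl, hm⟩
  · rfl
  rw [gnorm_mk]
  have hs : strip2 G e x.edges y.edges = (x.edges, y.edges) := by
    apply strip2_of_not
    rintro ⟨⟨l', hl'⟩, -⟩
    exact rng_not_mem e (ran_concat hl' ▸ hm)
  exact mk_congr
    (GPath.ext' rfl (by show (strip2 G e x.edges y.edges).1 = x.edges; rw [hs]))
    (GPath.ext' rfl (by show (strip2 G e x.edges y.edges).2 = y.edges; rw [hs]))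

theorem gnorm_fiber {e : G.Ed} {a b : GIS G} (ha : a ∈ Iset G e)
    (hg : gnorm G e b = gnorm G e a) : b = a := by
  rw [gnorm_fix ha] at hg
  rcases ha with rfl | ⟨x, y, hxy, heq, hm⟩
  · cases b with
    | zero => rfl
    | mk u w hc => exact absurd hg gnorm_ne_zero
  · subst heq
    cases b with
    | zero => exact absurd hg.symm mk_ne_zero
    | mk u w hc =>
      rw [gnorm_mk] at hg
      obtain ⟨hU, hW⟩ := GIS.mk.inj hg
      rcases strip2_cases e u.edges.length u.edges w.edges u.start le_rfl u.chain with
        heqs | hran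
      · have hu1 : u = (⟨u.start, (strip2 G e u.edges w.edges).1,
            (strip2_path e u w hc).1⟩ : GPath G) :=
          GPath.ext' rfl (by show u.edges = (strip2 G e u.edges w.edges).1; rw [heqs])
        have hw1 : w = (⟨w.start, (strip2 G e u.edges w.edges).2,
            (strip2_path e u w hc).2.1⟩ : GPath G) :=
          GPath.ext' rfl (by show w.edges = (strip2 G e u.edges w.edges).2; rw [heqs])
        exact mk_congr (hu1.trans hU) (hw1.trans hW)
      · exfalso
        apply src_not_mem e
        have hxran : x.ran = G.ranAux u.start (strip2 G e u.edges w.edges).1 := by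
          rw [← hU]; rfl
        rw [← hran, ← hxran]
        exact hm

/-- the separating relation -/
def Rrel (G : DGraph) (e : G.Ed) (a b : GIS G) : Prop :=
  (a ∈ Iset G e ∧ b ∈ Iset G e) ∨ gnorm G e a = gnorm G e b

theorem Rrel_refl (e : G.Ed) (a : GIS G) : Rrel G e a a := Or.inr rfl

theorem Rrel_symm {e : G.Ed} {a b : GIS G} (h : Rrel G e a b) : Rrel G e b a := by
  rcases h with ⟨h1, h2⟩ | h; exacts [Or.inl ⟨h2, h1⟩, Or.inr h.symm]

theorem Rrel_trans {e : G.Ed} {a b c : GIS G} (h1 : Rrel G e a b) (h2 : Rrel G e b c) :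
    Rrel G e a c := by
  rcases h1 with ⟨ha, hb⟩ | h1
  · rcases h2 with ⟨-, hc⟩ | h2
    · exact Or.inl ⟨ha, hc⟩
    · have : c = b := gnorm_fiber hb h2.symm
      exact Or.inl ⟨ha, this ▸ hb⟩
  · rcases h2 with ⟨hb, hc⟩ | h2
    · have : a = b := gnorm_fiber hb h1
      exact Or.inl ⟨this ▸ hb, hc⟩
    · exact Or.inr (h1.trans h2)

theorem Rrel_of_eq {e : G.Ed} {a b : GIS G} (h : a = b) : Rrel G e a b := h ▸ Rrel_refl e a

theorem Rrel_strip {e : G.Ed} {x y x' y' : GPath G} {hxy : x.ran = y.ran}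
    {hxy' : x'.ran = y'.ran} (h1 : x.start = x'.start) (h2 : y.start = y'.start)
    (hx : x.edges = x'.edges ++ [e]) (hy : y.edges = y'.edges ++ [e]) :
    Rrel G e (GIS.mk x y hxy) (GIS.mk x' y' hxy') :=
  Or.inr (gnorm_congr h1 h2 (by rw [hx, hy, strip2_concat]))

end Stmt13Aux
namespace Stmt13Aux

variable {G : DGraph}

def MainHyp (G : DGraph) (e : G.Ed) : Prop :=
  ∀ p : GPath G, p.start = G.src e → p.ran = G.rng e → p.edges ≠ [] →
    ∃ (t : GPath G) (ht : (GPath.ofEdge G e).ran = t.start),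
      p = (GPath.ofEdge G e).append t ht

theorem Hkey {e : G.Ed} (hyp : MainHyp G e) {f : G.Ed} {l : List G.Ed}
    (hc : G.Chain (G.src e) (f :: l)) (hf : f ≠ e) :
    G.ranAux (G.src e) (f :: l) ∈ Hset G e := by
  rintro ⟨t, ht1, ht2⟩
  have hch : G.Chain (G.src e) ((f :: l) ++ t.edges) :=
    G.chain_append hc (by rw [← ht1]; exact t.chain)
  obtain ⟨t', ht', heq⟩ := hyp ⟨G.src e, (f :: l) ++ t.edges, hch⟩ rfl
    (by show G.ranAux (G.src e) ((f :: l) ++ t.edges) = G.rng e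
        rw [G.ranAux_append, ← ht1]; exact ht2)
    (by simp)
  have hed : (f :: l) ++ t.edges = [e] ++ t'.edges := congrArg GPath.edges heq
  simp only [List.cons_append, List.singleton_append, List.cons.injEq] at hed
  exact hf hed.1

theorem Kright {e : G.Ed} (hyp : MainHyp G e) (x y x' y' : GPath G)
    (hxy : x.ran = y.ran) (hxy' : x'.ran = y'.ran)
    (h1 : x.start = x'.start) (h2 : y.start = y'.start)
    (hx : x.edges = x'.edges ++ [e]) (hy : y.edges = y'.edges ++ [e])
    (c : GIS G) :
    Rrel G e (GIS.mk x y hxy * c) (GIS.mk x' y' hxy' * c) := by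
  have cy : G.Chain y'.start (y'.edges ++ [e]) := by
    have hcy := y.chain; rwa [hy, h2] at hcy
  have hy'ran : G.ranAux y'.start y'.edges = G.src e := chain_concat_src G cy
  cases c with
  | zero =>
    show Rrel G e (GIS.mk x y hxy * 0) (GIS.mk x' y' hxy' * 0)
    rw [mul_zero', mul_zero']; exact Rrel_refl e 0
  | mk p q hpq =>
    by_cases hc1 : y'.IsPrefixOf p
    · obtain ⟨rest, hrest⟩ := hc1.2
      rcases rest with _ | ⟨f, rest₂⟩
      · -- A1 : p.edges = y'.edges
        have hpe : p.edges = y'.edges := by simpa using hrest.symm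
        have hnp : ¬ y.IsPrefixOf p := by
          rintro ⟨-, hpre⟩
          have hll := hpre.length_le
          rw [hy, hpe] at hll; simp at hll
        have hpy : p.IsPrefixOf y :=
          ⟨hc1.1.symm.trans h2.symm, by rw [hpe, hy]; exact ⟨[e], rfl⟩⟩
        rw [mul_pref2 hnp hpy (by exact hxy.trans (append_rem_ran _ _ _ _ _).symm),
            mul_pref1 hc1 (by exact (append_rem_ran _ _ _ _ _).trans hpq)]
        refine Rrel_strip ?_ ?_ ?_ ?_
        · exact h1
        · exact rfl
        · show x.edges = (x'.edges ++ p.edges.drop y'.edges.length) ++ [e]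
          rw [hpe, List.drop_length, List.append_nil, hx]
        · show q.edges ++ y.edges.drop p.edges.length = q.edges ++ [e]
          rw [hy, hpe, List.drop_left]
      · by_cases hf : f = e
        · -- A2 : equal products
          subst hf
          have hyp' : y.IsPrefixOf p :=
            ⟨h2.trans hc1.1, by rw [hy, ← hrest]; exact ⟨rest₂, by simp⟩⟩
          rw [mul_pref1 hyp' (by exact (append_rem_ran _ _ _ _ _).trans hpq),
              mul_pref1 hc1 (by exact (append_rem_ran _ _ _ _ _).trans hpq)]
          apply Rrel_of_eq
          refine mk_congr (GPath.ext' ?_ ?_) rfl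
          · exact h1
          show x.edges ++ p.edges.drop y.edges.length =
            x'.edges ++ p.edges.drop y'.edges.length
          have d1 : p.edges.drop y.edges.length = rest₂ := by
            rw [← hrest, hy, show y'.edges ++ f :: rest₂ = (y'.edges ++ [f]) ++ rest₂ by simp,
              List.drop_left]
          have d2 : p.edges.drop y'.edges.length = f :: rest₂ := by
            rw [← hrest, List.drop_left]
          rw [d1, d2, hx]; simp
        · -- A3 : left prod 0, right prod in ideal
          have hnp : ¬ y.IsPrefixOf p := by
            rintro ⟨-, hpre⟩
            rw [hy, ← hrest, prefix_cancel] at hpre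
            exact hf ((List.cons_prefix_cons.1 hpre).1).symm
          have hnp2 : ¬ p.IsPrefixOf y := by
            rintro ⟨-, hpre⟩
            rw [hy, ← hrest, prefix_cancel] at hpre
            exact hf (List.cons_prefix_cons.1 hpre).1
          rw [mul_none hnp hnp2,
            mul_pref1 hc1 (by exact (append_rem_ran _ _ _ _ _).trans hpq)]
          refine Or.inl ⟨zero_mem e, ?_⟩
          rw [mk_mem_iff]; refine Eq.mpr (congrArg (· ∈ Hset G e) (append_rem_ran _ _ _ _ _)) ?_
          have hchain : G.Chain (G.src e) (f :: rest₂) := by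
            have hcr := G.chain_append_right (v := p.start) (l1 := y'.edges) (l2 := f :: rest₂)
              (by rw [hrest]; exact p.chain)
            rwa [← hc1.1, hy'ran] at hcr
          have hpr : p.ran = G.ranAux (G.src e) (f :: rest₂) := by
            show G.ranAux p.start p.edges = _
            rw [← hrest, G.ranAux_append, ← hc1.1, hy'ran]
          rw [hpr]
          exact Hkey hyp hchain hf
    · by_cases hc2 : p.IsPrefixOf y'
      · -- B
        obtain ⟨rest, hrest⟩ := hc2.2
        have hnyp : ¬ y.IsPrefixOf p := by
          rintro ⟨hs, hpre⟩
          rw [hy] at hpre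
          exact hc1 ⟨h2.symm.trans hs, (List.prefix_append y'.edges [e]).trans hpre⟩
        have hpy : p.IsPrefixOf y :=
          ⟨hc2.1.trans h2.symm, by rw [hy]; exact hc2.2.trans (List.prefix_append _ _)⟩
        rw [mul_pref2 hnyp hpy (by exact hxy.trans (append_rem_ran _ _ _ _ _).symm),
            mul_pref2 hc1 hc2 (by exact hxy'.trans (append_rem_ran _ _ _ _ _).symm)]
        refine Rrel_strip ?_ ?_ ?_ ?_
        · exact h1
        · exact rfl
        · exact hx
        show q.edges ++ y.edges.drop p.edges.length =
          (q.edges ++ y'.edges.drop p.edges.length) ++ [e]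
        have d1 : y.edges.drop p.edges.length = rest ++ [e] := by
          rw [hy, ← hrest, List.append_assoc, List.drop_left]
        have d2 : y'.edges.drop p.edges.length = rest := by rw [← hrest, List.drop_left]
        rw [d1, d2, List.append_assoc]
      · -- C : both zero
        have hnyp : ¬ y.IsPrefixOf p := by
          rintro ⟨hs, hpre⟩
          rw [hy] at hpre
          exact hc1 ⟨h2.symm.trans hs, (List.prefix_append y'.edges [e]).trans hpre⟩
        have hnpy : ¬ p.IsPrefixOf y := by
          rintro ⟨hs, hpre⟩
          rw [hy] at hpre
          rcases prefix_concat_cases hpre with hcase | hcase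
          · exact hc2 ⟨hs.trans h2, hcase⟩
          · exact hc1 ⟨(hs.trans h2).symm, by rw [hcase]; exact List.prefix_append _ _⟩
        rw [mul_none hnyp hnpy, mul_none hc1 hc2]
        exact Rrel_refl e 0

end Stmt13Aux
namespace Stmt13Aux

variable {G : DGraph}

theorem Kleft {e : G.Ed} (hyp : MainHyp G e) (x y x' y' : GPath G)
    (hxy : x.ran = y.ran) (hxy' : x'.ran = y'.ran)
    (h1 : x.start = x'.start) (h2 : y.start = y'.start)
    (hx : x.edges = x'.edges ++ [e]) (hy : y.edges = y'.edges ++ [e])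
    (c : GIS G) :
    Rrel G e (c * GIS.mk x y hxy) (c * GIS.mk x' y' hxy') := by
  have cx : G.Chain x'.start (x'.edges ++ [e]) := by
    have hcx := x.chain; rwa [hx, h1] at hcx
  have hx'ran : G.ranAux x'.start x'.edges = G.src e := chain_concat_src G cx
  cases c with
  | zero =>
    show Rrel G e ((0 : GIS G) * _) ((0 : GIS G) * _)
    rw [zero_mul', zero_mul']; exact Rrel_refl e 0
  | mk p q hpq =>
    by_cases hq1 : q.IsPrefixOf x'
    · -- A : q ≤ x' and q ≤ x, strip pair
      obtain ⟨rest, hrest⟩ := hq1.2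
      have hqx : q.IsPrefixOf x :=
        ⟨hq1.1.trans h1.symm, by rw [hx]; exact hq1.2.trans (List.prefix_append _ _)⟩
      rw [mul_pref1 hqx (by exact (append_rem_ran _ _ _ _ _).trans hxy),
          mul_pref1 hq1 (by exact (append_rem_ran _ _ _ _ _).trans hxy')]
      refine Rrel_strip ?_ ?_ ?_ ?_
      · exact rfl
      · exact h2
      · show p.edges ++ x.edges.drop q.edges.length =
          (p.edges ++ x'.edges.drop q.edges.length) ++ [e]
        have d1 : x.edges.drop q.edges.length = rest ++ [e] := by
          rw [hx, ← hrest, List.append_assoc, List.drop_left]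
        have d2 : x'.edges.drop q.edges.length = rest := by rw [← hrest, List.drop_left]
        rw [d1, d2, List.append_assoc]
      · exact hy
    · by_cases hq2 : x'.IsPrefixOf q
      · -- B
        obtain ⟨rest, hrest⟩ := hq2.2
        have hrne : rest ≠ [] := by
          rintro rfl
          exact hq1 ⟨hq2.1.symm, by rw [← hrest]; simpa using List.prefix_rfl⟩
        rcases rest with _ | ⟨f, rest₂⟩
        · exact absurd rfl hrne
        by_cases hf : f = e
        · subst hf
          rcases rest₂ with _ | ⟨g, rest₃⟩
          · -- B1 : q.edges = x.edges, products equal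
            have hqx : q.IsPrefixOf x :=
              ⟨hq2.1.symm.trans h1.symm, by rw [hx, ← hrest]⟩
            rw [mul_pref1 hqx (by exact (append_rem_ran _ _ _ _ _).trans hxy),
                mul_pref2 hq1 hq2 (by exact hpq.trans (append_rem_ran _ _ _ _ _).symm)]
            apply Rrel_of_eq
            refine mk_congr (GPath.ext' ?_ ?_) (GPath.ext' ?_ ?_)
            · exact rfl
            · show p.edges ++ x.edges.drop q.edges.length = p.edges
              rw [hx, ← hrest, List.drop_length, List.append_nil]
            · exact h2
            · show y.edges = y'.edges ++ q.edges.drop x'.edges.length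
              rw [← hrest, List.drop_left, hy]
          · -- B2 : x ≤ q strictly, products equal
            have hnqx : ¬ q.IsPrefixOf x := by
              rintro ⟨-, hpre⟩
              rw [hx, ← hrest, prefix_cancel, List.cons_prefix_cons] at hpre
              simpa using hpre.2
            have hxq : x.IsPrefixOf q :=
              ⟨h1.trans hq2.1, by
                rw [hx, ← hrest,
                  show x'.edges ++ f :: g :: rest₃ = (x'.edges ++ [f]) ++ g :: rest₃ by simp]
                exact List.prefix_append _ _⟩
            rw [mul_pref2 hnqx hxq (by exact hpq.trans (append_rem_ran _ _ _ _ _).symm),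
                mul_pref2 hq1 hq2 (by exact hpq.trans (append_rem_ran _ _ _ _ _).symm)]
            apply Rrel_of_eq
            refine mk_congr rfl (GPath.ext' ?_ ?_)
            · exact h2
            · show y.edges ++ q.edges.drop x.edges.length =
                y'.edges ++ q.edges.drop x'.edges.length
              have d1 : q.edges.drop x.edges.length = g :: rest₃ := by
                rw [← hrest, hx,
                  show x'.edges ++ f :: g :: rest₃ = (x'.edges ++ [f]) ++ g :: rest₃ by simp,
                  List.drop_left]
              have d2 : q.edges.drop x'.edges.length = f :: g :: rest₃ := by
                rw [← hrest, List.drop_left]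
              rw [d1, d2, hy]; simp
        · -- B3 : left 0, right in ideal
          have hnqx : ¬ q.IsPrefixOf x := by
            rintro ⟨-, hpre⟩
            rw [hx, ← hrest, prefix_cancel, List.cons_prefix_cons] at hpre
            exact hf hpre.1
          have hnxq : ¬ x.IsPrefixOf q := by
            rintro ⟨-, hpre⟩
            rw [hx, ← hrest, prefix_cancel, List.cons_prefix_cons] at hpre
            exact hf hpre.1.symm
          rw [mul_none hnqx hnxq,
            mul_pref2 hq1 hq2 (by exact hpq.trans (append_rem_ran _ _ _ _ _).symm)]
          refine Or.inl ⟨zero_mem e, ?_⟩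
          rw [mk_mem_iff]
          have hchain : G.Chain (G.src e) (f :: rest₂) := by
            have hcr := G.chain_append_right (v := q.start) (l1 := x'.edges) (l2 := f :: rest₂)
              (by rw [hrest]; exact q.chain)
            rwa [← hq2.1, hx'ran] at hcr
          have hqr : p.ran = G.ranAux (G.src e) (f :: rest₂) := by
            rw [hpq]
            show G.ranAux q.start q.edges = _
            rw [← hrest, G.ranAux_append, ← hq2.1, hx'ran]
          rw [hqr]
          exact Hkey hyp hchain hf
      · -- C : both zero
        have hnqx : ¬ q.IsPrefixOf x := by
          rintro ⟨hs, hpre⟩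
          rw [hx] at hpre
          rcases prefix_concat_cases hpre with hcase | hcase
          · exact hq1 ⟨hs.trans h1, hcase⟩
          · exact hq2 ⟨(hs.trans h1).symm, by rw [hcase]; exact List.prefix_append _ _⟩
        have hnxq : ¬ x.IsPrefixOf q := by
          rintro ⟨hs, hpre⟩
          rw [hx] at hpre
          exact hq2 ⟨h1.symm.trans hs, (List.prefix_append x'.edges [e]).trans hpre⟩
        rw [mul_none hnqx hnxq, mul_none hq1 hq2]
        exact Rrel_refl e 0

end Stmt13Aux
namespace Stmt13Aux

variable {G : DGraph}

theorem gnorm_eq_self_of_not {e : G.Ed} {x y : GPath G} {hxy : x.ran = y.ran}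
    (hc : ¬ ((∃ l', x.edges = l' ++ [e]) ∧ (∃ l', y.edges = l' ++ [e]))) :
    gnorm G e (GIS.mk x y hxy) = GIS.mk x y hxy := by
  rw [gnorm_mk]
  have hs := strip2_of_not hc
  exact mk_congr
    (GPath.ext' rfl (by show (strip2 G e x.edges y.edges).1 = x.edges; rw [hs]))
    (GPath.ext' rfl (by show (strip2 G e x.edges y.edges).2 = y.edges; rw [hs]))

def leftLen : GIS G → ℕ
  | GIS.zero => 0
  | GIS.mk x _ _ => x.edges.length

theorem Lleft {e : G.Ed} (hyp : MainHyp G e) :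
    ∀ (n : ℕ) (a c : GIS G), leftLen a ≤ n → Rrel G e (a * c) (gnorm G e a * c) := by
  intro n
  induction n with
  | zero =>
    intro a c hlen
    cases a with
    | zero => exact Rrel_refl _ _
    | mk x y hxy =>
      have hc : ¬ ((∃ l', x.edges = l' ++ [e]) ∧ (∃ l', y.edges = l' ++ [e])) := by
        rintro ⟨⟨l', hl'⟩, -⟩
        have hlen' : x.edges.length ≤ 0 := hlen
        rw [hl'] at hlen'; simp at hlen'
      rw [gnorm_eq_self_of_not hc]; exact Rrel_refl _ _
  | succ n ih =>
    intro a c hlen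
    cases a with
    | zero => exact Rrel_refl _ _
    | mk x y hxy =>
      by_cases hc : (∃ l', x.edges = l' ++ [e]) ∧ (∃ l', y.edges = l' ++ [e])
      · obtain ⟨⟨l₁, hl₁⟩, ⟨l₂, hl₂⟩⟩ := hc
        have cx : G.Chain x.start (l₁ ++ [e]) := by rw [← hl₁]; exact x.chain
        have cyy : G.Chain y.start (l₂ ++ [e]) := by rw [← hl₂]; exact y.chain
        have hxy' : (⟨x.start, l₁, chain_take G cx⟩ : GPath G).ran =
            (⟨y.start, l₂, chain_take G cyy⟩ : GPath G).ran :=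
          (chain_concat_src G cx).trans (chain_concat_src G cyy).symm
        have step := Kright hyp x y ⟨x.start, l₁, chain_take G cx⟩
          ⟨y.start, l₂, chain_take G cyy⟩ hxy hxy' rfl rfl hl₁ hl₂ c
        have hg : gnorm G e (GIS.mk x y hxy) =
            gnorm G e (GIS.mk ⟨x.start, l₁, chain_take G cx⟩ ⟨y.start, l₂, chain_take G cyy⟩ hxy') :=
          gnorm_congr rfl rfl
            (by show strip2 G e x.edges y.edges = strip2 G e l₁ l₂
                rw [hl₁, hl₂, strip2_concat])
        have ihh := ih (GIS.mk ⟨x.start, l₁, chain_take G cx⟩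
          ⟨y.start, l₂, chain_take G cyy⟩ hxy') c (by
            have hlen' : x.edges.length ≤ n + 1 := hlen
            rw [hl₁] at hlen'
            show l₁.length ≤ n
            simp at hlen'; omega)
        rw [← hg] at ihh
        exact Rrel_trans step ihh
      · rw [gnorm_eq_self_of_not hc]; exact Rrel_refl _ _

theorem Lright {e : G.Ed} (hyp : MainHyp G e) :
    ∀ (n : ℕ) (a c : GIS G), leftLen a ≤ n → Rrel G e (c * a) (c * gnorm G e a) := by
  intro n
  induction n with
  | zero =>
    intro a c hlen
    cases a with
    | zero => exact Rrel_refl _ _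
    | mk x y hxy =>
      have hc : ¬ ((∃ l', x.edges = l' ++ [e]) ∧ (∃ l', y.edges = l' ++ [e])) := by
        rintro ⟨⟨l', hl'⟩, -⟩
        have hlen' : x.edges.length ≤ 0 := hlen
        rw [hl'] at hlen'; simp at hlen'
      rw [gnorm_eq_self_of_not hc]; exact Rrel_refl _ _
  | succ n ih =>
    intro a c hlen
    cases a with
    | zero => exact Rrel_refl _ _
    | mk x y hxy =>
      by_cases hc : (∃ l', x.edges = l' ++ [e]) ∧ (∃ l', y.edges = l' ++ [e])
      · obtain ⟨⟨l₁, hl₁⟩, ⟨l₂, hl₂⟩⟩ := hc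
        have cx : G.Chain x.start (l₁ ++ [e]) := by rw [← hl₁]; exact x.chain
        have cyy : G.Chain y.start (l₂ ++ [e]) := by rw [← hl₂]; exact y.chain
        have hxy' : (⟨x.start, l₁, chain_take G cx⟩ : GPath G).ran =
            (⟨y.start, l₂, chain_take G cyy⟩ : GPath G).ran :=
          (chain_concat_src G cx).trans (chain_concat_src G cyy).symm
        have step := Kleft hyp x y ⟨x.start, l₁, chain_take G cx⟩
          ⟨y.start, l₂, chain_take G cyy⟩ hxy hxy' rfl rfl hl₁ hl₂ c
        have hg : gnorm G e (GIS.mk x y hxy) =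
            gnorm G e (GIS.mk ⟨x.start, l₁, chain_take G cx⟩ ⟨y.start, l₂, chain_take G cyy⟩ hxy') :=
          gnorm_congr rfl rfl
            (by show strip2 G e x.edges y.edges = strip2 G e l₁ l₂
                rw [hl₁, hl₂, strip2_concat])
        have ihh := ih (GIS.mk ⟨x.start, l₁, chain_take G cx⟩
          ⟨y.start, l₂, chain_take G cyy⟩ hxy') c (by
            have hlen' : x.edges.length ≤ n + 1 := hlen
            rw [hl₁] at hlen'
            show l₁.length ≤ n
            simp at hlen'; omega)
        rw [← hg] at ihh
        exact Rrel_trans step ihh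
      · rw [gnorm_eq_self_of_not hc]; exact Rrel_refl _ _

theorem mul_compat {e : G.Ed} (hyp : MainHyp G e) {a b c d : GIS G}
    (h1 : Rrel G e a b) (h2 : Rrel G e c d) : Rrel G e (a * c) (b * d) := by
  rcases h1 with ⟨ha, hb⟩ | h1
  · exact Or.inl ⟨(ideal_Iset e a ha c).1, (ideal_Iset e b hb d).1⟩
  rcases h2 with ⟨hcc, hd⟩ | h2
  · exact Or.inl ⟨(ideal_Iset e c hcc a).2, (ideal_Iset e d hd b).2⟩
  · have t1 := Lleft hyp (leftLen a) a c le_rfl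
    have t2 := Lright hyp (leftLen c) c (gnorm G e a) le_rfl
    have t3 := Lleft hyp (leftLen b) b d le_rfl
    have t4 := Lright hyp (leftLen d) d (gnorm G e b) le_rfl
    have lhs := Rrel_trans t1 t2
    have rhs := Rrel_trans t3 t4
    rw [← h1, ← h2] at rhs
    exact Rrel_trans lhs (Rrel_symm rhs)

def RCon (G : DGraph) (e : G.Ed) (hyp : MainHyp G e) : Con (GIS G) where
  r := Rrel G e
  iseqv := ⟨Rrel_refl e, Rrel_symm, Rrel_trans⟩
  mul' := fun h1 h2 => mul_compat hyp h1 h2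

theorem gen_in_Rrel (e : G.Ed) :
    Rrel G e (vertexEl G (G.src e)) (GIS.mk (GPath.ofEdge G e) (GPath.ofEdge G e) rfl) := by
  apply Or.inr
  show gnorm G e (GIS.mk (GPath.ofVertex G (G.src e)) (GPath.ofVertex G (G.src e)) rfl) = _
  rw [gnorm_mk, gnorm_mk]
  have hs0 : strip2 G e ([] : List G.Ed) [] = ([], []) :=
    strip2_of_not (by rintro ⟨⟨l', hl'⟩, -⟩; simp at hl')
  have hs1 : strip2 G e (GPath.ofVertex G (G.src e)).edges
      (GPath.ofVertex G (G.src e)).edges = ([], []) := hs0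
  have hs2 : strip2 G e (GPath.ofEdge G e).edges (GPath.ofEdge G e).edges = ([], []) := by
    show strip2 G e ([] ++ [e]) ([] ++ [e]) = _
    rw [strip2_concat, hs0]
  exact mk_congr
    (GPath.ext' rfl (by
      show (strip2 G e (GPath.ofVertex G (G.src e)).edges (GPath.ofVertex G (G.src e)).edges).1
        = (strip2 G e (GPath.ofEdge G e).edges (GPath.ofEdge G e).edges).1
      rw [hs1, hs2]))
    (GPath.ext' rfl (by
      show (strip2 G e (GPath.ofVertex G (G.src e)).edges (GPath.ofVertex G (G.src e)).edges).2
        = (strip2 G e (GPath.ofEdge G e).edges (GPath.ofEdge G e).edges).2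
      rw [hs1, hs2]))

end Stmt13Aux
/-- Let `e ∈ E¹` with `v = s(e)`, and suppose every path `p` of positive
length with `s(p) = v` and `r(p) = r(e)` has the form `p = e t` for some path `t`. Then the
least congruence on `G(E)` containing `(v, e e⁻¹)` is not a Rees congruence. -/
theorem stmt13 (G : DGraph) (e : G.Ed)
    (h : ∀ p : GPath G, p.start = G.src e → p.ran = G.rng e → p.edges ≠ [] →
      ∃ (t : GPath G) (ht : (GPath.ofEdge G e).ran = t.start),
        p = (GPath.ofEdge G e).append t ht) :
    ¬ IsReesCon (conGen (fun a b : GIS G =>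
      a = vertexEl G (G.src e) ∧
      b = GIS.mk (GPath.ofEdge G e) (GPath.ofEdge G e) rfl)) := by
  open Stmt13Aux in
  rintro ⟨I, hIdeal, hIff⟩
  have hyp : Stmt13Aux.MainHyp G e := h
  have hgen : (conGen (fun a b : GIS G =>
      a = vertexEl G (G.src e) ∧
      b = GIS.mk (GPath.ofEdge G e) (GPath.ofEdge G e) rfl))
      (vertexEl G (G.src e)) (GIS.mk (GPath.ofEdge G e) (GPath.ofEdge G e) rfl) :=
    ConGen.Rel.of _ _ ⟨rfl, rfl⟩
  have hne : vertexEl G (G.src e) ≠ GIS.mk (GPath.ofEdge G e) (GPath.ofEdge G e) rfl := by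
    intro hh
    obtain ⟨h1, -⟩ := GIS.mk.inj hh
    have hed := congrArg GPath.edges h1
    simp [GPath.ofVertex, GPath.ofEdge] at hed
  have hvI : vertexEl G (G.src e) ∈ I := (((hIff _ _).1 hgen).resolve_right hne).1
  have h0I : (0 : GIS G) ∈ I := by
    have hmul := (hIdeal _ hvI 0).1
    rwa [Stmt13Aux.mul_zero'] at hmul
  have hρ0 : (conGen (fun a b : GIS G =>
      a = vertexEl G (G.src e) ∧
      b = GIS.mk (GPath.ofEdge G e) (GPath.ofEdge G e) rfl))
      (vertexEl G (G.src e)) 0 := (hIff _ _).2 (Or.inl ⟨hvI, h0I⟩)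
  have hle : conGen (fun a b : GIS G =>
      a = vertexEl G (G.src e) ∧
      b = GIS.mk (GPath.ofEdge G e) (GPath.ofEdge G e) rfl) ≤
      Stmt13Aux.RCon G e hyp := by
    apply Con.conGen_le.2
    rintro a b ⟨rfl, rfl⟩
    exact Stmt13Aux.gen_in_Rrel e
  have hR : Stmt13Aux.Rrel G e (vertexEl G (G.src e)) 0 := hle hρ0
  rcases hR with ⟨hv, -⟩ | hg
  · have : (GPath.ofVertex G (G.src e)).ran ∈ Stmt13Aux.Hset G e :=
      Stmt13Aux.mk_mem_iff.1 hv
    exact Stmt13Aux.src_not_mem e this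
  · exact Stmt13Aux.gnorm_ne_zero hg
end
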